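/- For every real s > 1, ∫₀^∞ h^s · 8 ∑_{n=1}^∞ e^{−2h²n²}(4h³n⁴ − 3hn²) dh = 2^{−s/2} s(s−1) Γ(s/2) ζ(s); equivalently this integral equals 2(π/2)^{s/2} ξ(s), where ξ(s) = (1/2)s(s−1)π^{−s/2}Γ(s/2)ζ(s). -/
import Mathlib


open MeasureTheory

section Aux

open Real Set

private lemma gauss_int' {q b : ℝ} (hq : -1 < q) (hb : 0 < b) :
    ∫ x in Ioi (0:ℝ), x ^ q * rexp (-b * x ^ 2) = b ^ (-(q+1)/2) * (1/2) * Gamma ((q+1)/2) := by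
  have h2 : ∀ x : ℝ, x ^ (2:ℝ) = x ^ (2:ℕ) := fun x => by
    rw [← Real.rpow_natCast x 2]; norm_num
  have := integral_rpow_mul_exp_neg_mul_rpow (p := 2) (q := q) (b := b) (by norm_num) hq hb
  simp_rw [h2] at this
  rw [this]

private lemma gauss_c' {s' : ℝ} (hs' : -1 < s') {c : ℝ} (hc : 0 < c) :
    ∫ h in Ioi (0:ℝ), h ^ s' * rexp (-(2*c^2) * h ^ 2)
      = 2 ^ (-(s'+1)/2) * c ^ (-(s'+1)) * ((1/2) * Gamma ((s'+1)/2)) := by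
  rw [gauss_int' hs' (by positivity), mul_rpow (by norm_num) (by positivity),
    ← Real.rpow_natCast c 2, ← Real.rpow_mul hc.le,
    show ((2:ℕ):ℝ) * (-(s'+1)/2) = -(s'+1) by push_cast; ring]
  ring

private lemma Feq' (s : ℝ) (c : ℝ) : ∀ h ∈ Ioi (0:ℝ),
    h ^ s * (8 * (rexp (-2 * h^2 * c^2) * (4*h^3*c^4 - 3*h*c^2)))
      = (32*c^4) * (h ^ (s+3) * rexp (-(2*c^2) * h^2))
        - (24*c^2) * (h ^ (s+1) * rexp (-(2*c^2) * h^2)) := by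
  intro h hh
  have hh' : (0:ℝ) < h := hh
  have e3 : h ^ (s+3) = h ^ s * h ^ (3:ℕ) := by
    rw [show (s+3) = s + ((3:ℕ):ℝ) by push_cast; ring, rpow_add hh', rpow_natCast]
  have e1 : h ^ (s+1) = h ^ s * h ^ (1:ℕ) := by
    rw [show (s+1) = s + ((1:ℕ):ℝ) by push_cast; ring, rpow_add hh', rpow_natCast]
  have eexp : rexp (-(2*c^2) * h^2) = rexp (-2 * h^2 * c^2) := by ring_nf
  rw [e3, e1, eexp]; ring

private lemma F_integrable' {s : ℝ} (hs : 1 < s) {c : ℝ} (hc : 0 < c) :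
    IntegrableOn (fun h => h ^ s * (8 * (rexp (-2 * h^2 * c^2) * (4*h^3*c^4 - 3*h*c^2))))
      (Ioi (0:ℝ)) := by
  have hb : (0:ℝ) < 2*c^2 := by positivity
  have I1 := integrableOn_rpow_mul_exp_neg_mul_sq hb (show (-1:ℝ) < s+3 by linarith)
  have I2 := integrableOn_rpow_mul_exp_neg_mul_sq hb (show (-1:ℝ) < s+1 by linarith)
  have Iall : IntegrableOn (fun h : ℝ => (32*c^4) * (h ^ (s+3) * rexp (-(2*c^2) * h^2))
      - (24*c^2) * (h ^ (s+1) * rexp (-(2*c^2) * h^2))) (Ioi (0:ℝ)) :=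
    (I1.const_mul _).sub (I2.const_mul _)
  exact Iall.congr_fun (fun h hh => (Feq' s c h hh).symm) measurableSet_Ioi

private lemma per_n' {s : ℝ} (hs : 1 < s) {c : ℝ} (hc : 0 < c) :
    ∫ h in Ioi (0:ℝ), h ^ s * (8 * (rexp (-2 * h^2 * c^2) * (4*h^3*c^4 - 3*h*c^2)))
      = 2 ^ (-s/2) * s * (s-1) * Gamma (s/2) * c ^ (-s) := by
  have hb : (0:ℝ) < 2*c^2 := by positivity
  have I1 := integrableOn_rpow_mul_exp_neg_mul_sq hb (show (-1:ℝ) < s+3 by linarith)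
  have I2 := integrableOn_rpow_mul_exp_neg_mul_sq hb (show (-1:ℝ) < s+1 by linarith)
  rw [setIntegral_congr_fun measurableSet_Ioi (Feq' s c),
    integral_sub (I1.const_mul _) (I2.const_mul _), integral_const_mul, integral_const_mul,
    gauss_c' (show (-1:ℝ) < s+3 by linarith) hc, gauss_c' (show (-1:ℝ) < s+1 by linarith) hc]
  have hG3 : Gamma ((s+3+1)/2) = (s/2+1) * (s/2) * Gamma (s/2) := by
    rw [show (s+3+1)/2 = (s/2+1)+1 by ring, Real.Gamma_add_one (by positivity),
      show (s/2+1) = (s/2)+1 by ring, Real.Gamma_add_one (by positivity)]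
    ring
  have hG1 : Gamma ((s+1+1)/2) = (s/2) * Gamma (s/2) := by
    rw [show (s+1+1)/2 = (s/2)+1 by ring, Real.Gamma_add_one (by positivity)]
  have h2a : (2:ℝ) ^ (-(s+3+1)/2) = 2 ^ (-s/2) * (1/4) := by
    rw [show -(s+3+1)/2 = -s/2 + (-2) by ring, rpow_add (by norm_num),
      show ((-2:ℝ)) = ((-2:ℤ):ℝ) by norm_num, rpow_intCast]
    norm_num
  have h2b : (2:ℝ) ^ (-(s+1+1)/2) = 2 ^ (-s/2) * (1/2) := by
    rw [show -(s+1+1)/2 = -s/2 + (-1) by ring, rpow_add (by norm_num),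
      show ((-1:ℝ)) = ((-1:ℤ):ℝ) by norm_num, rpow_intCast]
    norm_num
  have hc4 : (c:ℝ)^(4:ℕ) * c ^ (-(s+3+1)) = c ^ (-s) := by
    rw [← Real.rpow_natCast c 4, ← rpow_add hc]; congr 1; push_cast; ring
  have hc2 : (c:ℝ)^(2:ℕ) * c ^ (-(s+1+1)) = c ^ (-s) := by
    rw [← Real.rpow_natCast c 2, ← rpow_add hc]; congr 1; push_cast; ring
  rw [hG3, hG1, h2a, h2b]
  linear_combination (32 * (2:ℝ) ^ (-s/2) * (1/4) * (1/2) * ((s/2+1)*(s/2)) * Gamma (s/2)) * hc4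
    - (24 * (2:ℝ) ^ (-s/2) * (1/2) * (1/2) * (s/2) * Gamma (s/2)) * hc2

private lemma norm_bound' {s : ℝ} (hs : 1 < s) {c : ℝ} (hc : 0 < c) :
    ∫ h in Ioi (0:ℝ), ‖h ^ s * (8 * (rexp (-2 * h^2 * c^2) * (4*h^3*c^4 - 3*h*c^2)))‖
      ≤ (4 * Gamma ((s+4)/2) + 6 * Gamma ((s+2)/2)) * 2 ^ (-s/2) * c ^ (-s) := by
  have hb : (0:ℝ) < 2*c^2 := by positivity
  have I1 := integrableOn_rpow_mul_exp_neg_mul_sq hb (show (-1:ℝ) < s+3 by linarith)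
  have I2 := integrableOn_rpow_mul_exp_neg_mul_sq hb (show (-1:ℝ) < s+1 by linarith)
  have hpt : ∀ h ∈ Ioi (0:ℝ),
      ‖h ^ s * (8 * (rexp (-2 * h^2 * c^2) * (4*h^3*c^4 - 3*h*c^2)))‖
        ≤ (32*c^4) * (h ^ (s+3) * rexp (-(2*c^2) * h^2))
          + (24*c^2) * (h ^ (s+1) * rexp (-(2*c^2) * h^2)) := by
    intro h hh
    have hh' : (0:ℝ) < h := hh
    rw [Feq' s c h hh, Real.norm_eq_abs]
    have hA : (0:ℝ) ≤ (32*c^4) * (h ^ (s+3) * rexp (-(2*c^2) * h^2)) :=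
      mul_nonneg (by positivity) (mul_nonneg (rpow_nonneg hh'.le _) (exp_nonneg _))
    have hB : (0:ℝ) ≤ (24*c^2) * (h ^ (s+1) * rexp (-(2*c^2) * h^2)) :=
      mul_nonneg (by positivity) (mul_nonneg (rpow_nonneg hh'.le _) (exp_nonneg _))
    calc |_ - _| ≤ |(32*c^4) * (h ^ (s+3) * rexp (-(2*c^2) * h^2))|
          + |(24*c^2) * (h ^ (s+1) * rexp (-(2*c^2) * h^2))| := abs_sub _ _
      _ = _ := by rw [abs_of_nonneg hA, abs_of_nonneg hB]
  have hle := setIntegral_mono_on ((F_integrable' hs hc).norm)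
    ((I1.const_mul (32*c^4)).add (I2.const_mul (24*c^2))) measurableSet_Ioi hpt
  refine hle.trans (le_of_eq ?_)
  simp only [Pi.add_apply]
  rw [integral_add (I1.const_mul _) (I2.const_mul _), integral_const_mul, integral_const_mul,
    gauss_c' (show (-1:ℝ) < s+3 by linarith) hc, gauss_c' (show (-1:ℝ) < s+1 by linarith) hc]
  have h2a : (2:ℝ) ^ (-(s+3+1)/2) = 2 ^ (-s/2) * (1/4) := by
    rw [show -(s+3+1)/2 = -s/2 + (-2) by ring, rpow_add (by norm_num),
      show ((-2:ℝ)) = ((-2:ℤ):ℝ) by norm_num, rpow_intCast]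
    norm_num
  have h2b : (2:ℝ) ^ (-(s+1+1)/2) = 2 ^ (-s/2) * (1/2) := by
    rw [show -(s+1+1)/2 = -s/2 + (-1) by ring, rpow_add (by norm_num),
      show ((-1:ℝ)) = ((-1:ℤ):ℝ) by norm_num, rpow_intCast]
    norm_num
  have hc4 : (c:ℝ)^(4:ℕ) * c ^ (-(s+3+1)) = c ^ (-s) := by
    rw [← Real.rpow_natCast c 4, ← rpow_add hc]; congr 1; push_cast; ring
  have hc2 : (c:ℝ)^(2:ℕ) * c ^ (-(s+1+1)) = c ^ (-s) := by
    rw [← Real.rpow_natCast c 2, ← rpow_add hc]; congr 1; push_cast; ring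
  have hG3 : Gamma ((s+3+1)/2) = Gamma ((s+4)/2) := by ring_nf
  have hG1 : Gamma ((s+1+1)/2) = Gamma ((s+2)/2) := by ring_nf
  rw [h2a, h2b, hG3, hG1]
  linear_combination (32 * (2:ℝ) ^ (-s/2) * (1/4) * (1/2) * Gamma ((s+4)/2)) * hc4
    + (24 * (2:ℝ) ^ (-s/2) * (1/2) * (1/2) * Gamma ((s+2)/2)) * hc2

end Aux

/-- The completed zeta factor `ξ(s) = (1/2) s (s-1) π^{-s/2} Γ(s/2) ζ(s)`,
with `ζ(s) = ∑_{n≥1} n^{-s}` (real `s > 1`). -/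
noncomputable def xiFun (s : ℝ) : ℝ :=
  (1 / 2) * s * (s - 1) * Real.pi ^ (-s / 2) * Real.Gamma (s / 2) * ∑' n : ℕ+, (n : ℝ) ^ (-s)

open Real Set in
/-- For every real `s > 1`, the `s`-th moment of the maximum of the
three-dimensional Bessel bridge, `∫₀^∞ h^s q₁(h) dh` with
`q₁(h) = 8 ∑_{n≥1} e^{-2h²n²}(4h³n⁴ - 3hn²)`, equals
`2^{-s/2} s (s-1) Γ(s/2) ζ(s)`, which in turn equals `2 (π/2)^{s/2} ξ(s)`. -/
theorem moment_H1 (s : ℝ) (hs : 1 < s) :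
    (∫ h in Set.Ioi (0 : ℝ),
        h ^ s * (8 * ∑' n : ℕ+, Real.exp (-2 * h ^ 2 * (n : ℝ) ^ 2) *
          (4 * h ^ 3 * (n : ℝ) ^ 4 - 3 * h * (n : ℝ) ^ 2)))
      = 2 ^ (-s / 2) * s * (s - 1) * Real.Gamma (s / 2) * (∑' n : ℕ+, (n : ℝ) ^ (-s)) ∧
    (∫ h in Set.Ioi (0 : ℝ),
        h ^ s * (8 * ∑' n : ℕ+, Real.exp (-2 * h ^ 2 * (n : ℝ) ^ 2) *
          (4 * h ^ 3 * (n : ℝ) ^ 4 - 3 * h * (n : ℝ) ^ 2)))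
      = 2 * (Real.pi / 2) ^ (s / 2) * xiFun s := by
  have hcn : ∀ n : ℕ+, (0:ℝ) < (n:ℝ) := fun n => by exact_mod_cast n.pos
  have hInt : ∀ n : ℕ+, Integrable
      (fun h : ℝ => h ^ s * (8 * (rexp (-2 * h^2 * (n:ℝ)^2) * (4*h^3*(n:ℝ)^4 - 3*h*(n:ℝ)^2))))
      (volume.restrict (Ioi 0)) := fun n => F_integrable' hs (hcn n)
  have hSumNat : Summable (fun n : ℕ => (n:ℝ) ^ (-s)) :=
    Real.summable_nat_rpow.mpr (by linarith)
  have hSumP : Summable (fun n : ℕ+ => ((n:ℕ):ℝ) ^ (-s)) := hSumNat.subtype _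
  have hSum : Summable (fun n : ℕ+ => ∫ h in Ioi (0:ℝ),
      ‖h ^ s * (8 * (rexp (-2 * h^2 * (n:ℝ)^2) * (4*h^3*(n:ℝ)^4 - 3*h*(n:ℝ)^2)))‖) := by
    apply Summable.of_nonneg_of_le
      (fun n => integral_nonneg (fun h => norm_nonneg _))
      (fun n => norm_bound' hs (hcn n))
    exact (hSumP.mul_left _)
  have key : (∫ h in Set.Ioi (0 : ℝ),
      h ^ s * (8 * ∑' n : ℕ+, Real.exp (-2 * h ^ 2 * (n : ℝ) ^ 2) *
        (4 * h ^ 3 * (n : ℝ) ^ 4 - 3 * h * (n : ℝ) ^ 2)))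
      = 2 ^ (-s / 2) * s * (s - 1) * Real.Gamma (s / 2) * (∑' n : ℕ+, (n : ℝ) ^ (-s)) := by
    have h1 : ∀ h : ℝ, h ^ s * (8 * ∑' n : ℕ+, Real.exp (-2 * h ^ 2 * (n : ℝ) ^ 2) *
        (4 * h ^ 3 * (n : ℝ) ^ 4 - 3 * h * (n : ℝ) ^ 2))
        = ∑' n : ℕ+, h ^ s * (8 * (rexp (-2 * h^2 * (n:ℝ)^2) * (4*h^3*(n:ℝ)^4 - 3*h*(n:ℝ)^2))) := by
      intro h
      rw [← tsum_mul_left, ← tsum_mul_left]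
    simp_rw [h1]
    rw [← integral_tsum_of_summable_integral_norm hInt hSum]
    have h2 : ∀ n : ℕ+, (∫ h in Ioi (0:ℝ),
        h ^ s * (8 * (rexp (-2 * h^2 * (n:ℝ)^2) * (4*h^3*(n:ℝ)^4 - 3*h*(n:ℝ)^2))))
        = (2 ^ (-s/2) * s * (s-1) * Gamma (s/2)) * (n:ℝ) ^ (-s) := fun n => per_n' hs (hcn n)
    simp_rw [h2]
    rw [tsum_mul_left]
  refine ⟨key, ?_⟩
  rw [key]
  unfold xiFun
  have e1 : (π/2) ^ (s/2) * π ^ (-s/2) = 2 ^ (-s/2) := by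
    rw [div_rpow pi_pos.le (by norm_num : (0:ℝ) ≤ 2), div_mul_eq_mul_div,
      show (-s/2) = -(s/2) by ring, ← rpow_add pi_pos]
    norm_num [rpow_neg (show (0:ℝ) ≤ 2 by norm_num)]
  linear_combination (-s * (s-1) * Gamma (s/2) * (∑' n : ℕ+, (n:ℝ) ^ (-s))) * e1
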